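/- Let (α_k)_{k≥0} be a non-increasing sequence of positive reals and (θ_k)_{k≥0} a sequence of nonnegative reals. Then for every k ≥ 0: α_k·θ_k ≤ (1/(k+1))·∑_{t=0}^{k} α_t·θ_t + ∑_{t=1}^{k} (1/(t²+t))·∑_{h=k+1−t}^{k} α_h·(θ_h − θ_{k−t}). -/

import Mathlib

/-- **Last-iterate bound (Orabona).**
For a non-increasing sequence of positive reals `(α_k)` and nonnegative reals `(θ_k)`,
for every `k`:
`α_k θ_k ≤ (1/(k+1)) ∑_{t=0}^k α_t θ_t
  + ∑_{t=1}^k (1/(t²+t)) ∑_{h=k+1−t}^k α_h (θ_h − θ_{k−t})`. -/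
theorem last_iterate_bound
    (α θ : ℕ → ℝ) (hαpos : ∀ k, 0 < α k) (hαmono : Antitone α)
    (hθ : ∀ k, 0 ≤ θ k) (k : ℕ) :
    α k * θ k
      ≤ (1 / ((k : ℝ) + 1)) * ∑ t ∈ Finset.range (k + 1), α t * θ t
        + ∑ t ∈ Finset.Icc 1 k, (1 / ((t : ℝ) ^ 2 + (t : ℝ))) *
            ∑ h ∈ Finset.Icc (k + 1 - t) k, α h * (θ h - θ (k - t)) := by
  set S : ℕ → ℝ := fun t => (1 / ((t : ℝ) + 1)) * ∑ h ∈ Finset.Icc (k - t) k, α h * θ h with hS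
  have key : ∀ t, t ≤ k → S 0 ≤ S t + ∑ s ∈ Finset.Icc 1 t,
      (1 / ((s : ℝ) ^ 2 + (s : ℝ))) *
        ∑ h ∈ Finset.Icc (k + 1 - s) k, α h * (θ h - θ (k - s)) := by
    intro t
    induction t with
    | zero => intro _; simp
    | succ t ih =>
      intro ht
      have ht' : t ≤ k := Nat.le_of_succ_le ht
      have h1 := ih ht'
      set m := k - (t + 1) with hm
      have hm1 : m + 1 = k - t := by omega
      have hm1k : m + 1 ≤ k + 1 := by omega
      have hk1 : k + 1 - (t + 1) = m + 1 := by omega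
      have hmk : m ≤ k := by omega
      set A : ℝ := ∑ h ∈ Finset.Icc (m + 1) k, α h * θ h with hA
      set B : ℝ := ∑ h ∈ Finset.Icc (m + 1) k, α h with hB
      have hcard : (Finset.Icc (m + 1) k).card = t + 1 := by
        rw [Nat.card_Icc]; omega
      have hBle : B ≤ ((t : ℝ) + 1) * α m := by
        calc B ≤ ∑ _h ∈ Finset.Icc (m + 1) k, α m := by
              apply Finset.sum_le_sum
              intro h hh
              exact hαmono (by simp [Finset.mem_Icc] at hh; omega)
          _ = ((t : ℝ) + 1) * α m := by
              rw [Finset.sum_const, hcard, nsmul_eq_mul]; push_cast; ring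
      have hsumfull : ∑ h ∈ Finset.Icc m k, α h * θ h = α m * θ m + A := by
        rw [hA, Finset.Icc_add_one_left_eq_Ioc, Finset.Icc_eq_cons_Ioc hmk, Finset.sum_cons]
      have hdiff : ∑ h ∈ Finset.Icc (m + 1) k, α h * (θ h - θ m) = A - θ m * B := by
        rw [hA, hB, Finset.mul_sum, ← Finset.sum_sub_distrib]
        congr 1; ext h; ring
      set T : ℝ := (t : ℝ) with hT
      have hT0 : (0:ℝ) ≤ T := by positivity
      have hT1 : (0:ℝ) < T + 1 := by linarith
      have hT2 : (0:ℝ) < T + 2 := by linarith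
      have step : S t ≤ S (t + 1) + (1 / ((T + 1) * (T + 2))) * (A - θ m * B) := by
        have hSt : S t = (1 / (T + 1)) * A := by
          simp only [hS, ← hm1, hA]
          rfl
        have hSt1 : S (t + 1) = (1 / (T + 2)) * (α m * θ m + A) := by
          simp only [hS, ← hm, hsumfull]
          push_cast; ring_nf
          rw [hT]; ring
        have heq : (1 / (T + 2)) * (α m * θ m + A) + (1 / ((T + 1) * (T + 2))) * (A - θ m * B)
            - (1 / (T + 1)) * A
            = (θ m * ((T + 1) * α m) - θ m * B) / ((T + 1) * (T + 2)) := by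
          field_simp; ring
        have hnum : 0 ≤ θ m * ((T + 1) * α m) - θ m * B := by
          have := mul_le_mul_of_nonneg_left hBle (hθ m)
          linarith
        have := div_nonneg hnum (le_of_lt (mul_pos hT1 hT2))
        rw [hSt, hSt1]; linarith [heq ▸ this]
      have hsum : ∑ s ∈ Finset.Icc 1 (t + 1),
          (1 / ((s : ℝ) ^ 2 + (s : ℝ))) *
            ∑ h ∈ Finset.Icc (k + 1 - s) k, α h * (θ h - θ (k - s))
          = (∑ s ∈ Finset.Icc 1 t,
          (1 / ((s : ℝ) ^ 2 + (s : ℝ))) *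
            ∑ h ∈ Finset.Icc (k + 1 - s) k, α h * (θ h - θ (k - s)))
            + (1 / (((t:ℝ) + 1) ^ 2 + ((t:ℝ) + 1))) *
            ∑ h ∈ Finset.Icc (k + 1 - (t+1)) k, α h * (θ h - θ (k - (t+1))) := by
        rw [Finset.sum_Icc_succ_top (by omega)]
        push_cast; ring_nf
        congr 1; congr 1; apply Finset.sum_congr rfl; intro x _; ring
      have hden : ((T + 1) ^ 2 + (T + 1)) = (T + 1) * (T + 2) := by ring
      rw [hsum]
      have hlast : (1 / (((t:ℝ) + 1) ^ 2 + ((t:ℝ) + 1))) *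
            ∑ h ∈ Finset.Icc (k + 1 - (t+1)) k, α h * (θ h - θ (k - (t+1)))
          = (1 / ((T + 1) * (T + 2))) * (A - θ m * B) := by
        rw [hk1, ← hm, hdiff, ← hT, hden]
      rw [hlast]
      linarith
  have hfinal := key k le_rfl
  have hS0 : S 0 = α k * θ k := by
    simp [hS]
  have hSk : S k = (1 / ((k : ℝ) + 1)) * ∑ t ∈ Finset.range (k + 1), α t * θ t := by
    simp only [hS, Nat.sub_self]
    rw [← Finset.Ico_add_one_right_eq_Icc, ← Finset.range_eq_Ico]
  rw [hS0, hSk] at hfinal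
  exact hfinal
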